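/- arXiv:1705.04586 — 9 statements merged into one kernel-verified Lean document; each statement's English description precedes it below -/
import Mathlib

section
/- Let c ∈ ℝ with c² ≠ 1, let ζ ∈ ℝ with ζ ≠ 0, and let f : ℝ → ℝ be twice differentiable with (c²−1)·f''(z) + sin(f(z)) = 0 for all z. Define A(z) = −i(4(1+c)ζ² − (c−1)cos(f(z)))/(8ζ), B(z) = (c−1)(i·sin(f(z)) + 2(c+1)ζ·f'(z))/(8ζ), C(z) = −iζ/2 + i·cos(f(z))/(8ζ), D(z) = i·sin(f(z))/(8ζ) + (c−1)·f'(z)/4. Suppose χ₁, χ₂ : ℝ × ℝ → ℂ are twice continuously differentiable in (z,τ) and satisfy ∂_z χ₁ = C χ₁ + D χ₂, ∂_z χ₂ = −conj(D) χ₁ − C χ₂, ∂_τ χ₁ = A χ₁ + B χ₂, ∂_τ χ₂ = −conj(B) χ₁ − A χ₂. Then w(z,τ) = χ₁(z,τ)² + χ₂(z,τ)² satisfies the linearized sine-Gordon equation (c²−1)·∂²_z w − 2c·∂_z∂_τ w + ∂²_τ w + cos(f(z))·w = 0. -/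
open Complex

/-- Squared-eigenfunction connection: if `(χ₁, χ₂)` solves both parts of the traveling-frame
sine-Gordon Lax pair at spectral parameter `ζ`, then `w = χ₁² + χ₂²` solves the linearized
sine-Gordon equation `(c²−1)w_zz − 2c w_zτ + w_ττ + cos(f(z))w = 0`. -/
theorem squared_eigenfunctions_solve_linearization
    (c ζ : ℝ) (hc : c ^ 2 ≠ 1) (hζ : ζ ≠ 0)
    (f : ℝ → ℝ) (hf : Differentiable ℝ f) (hf' : Differentiable ℝ (deriv f))
    (hode : ∀ z : ℝ, (c ^ 2 - 1) * deriv (deriv f) z + Real.sin (f z) = 0)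
    (A B C D : ℝ → ℂ)
    (hA : ∀ z : ℝ, A z = -Complex.I * (4 * (1 + (c : ℂ)) * (ζ : ℂ) ^ 2 -
      ((c : ℂ) - 1) * (Real.cos (f z) : ℂ)) / (8 * (ζ : ℂ)))
    (hB : ∀ z : ℝ, B z = ((c : ℂ) - 1) * (Complex.I * (Real.sin (f z) : ℂ) +
      2 * ((c : ℂ) + 1) * (ζ : ℂ) * ((deriv f z : ℝ) : ℂ)) / (8 * (ζ : ℂ)))
    (hC : ∀ z : ℝ, C z = -Complex.I * (ζ : ℂ) / 2 +
      Complex.I * (Real.cos (f z) : ℂ) / (8 * (ζ : ℂ)))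
    (hD : ∀ z : ℝ, D z = Complex.I * (Real.sin (f z) : ℂ) / (8 * (ζ : ℂ)) +
      ((c : ℂ) - 1) * ((deriv f z : ℝ) : ℂ) / 4)
    (χ₁ χ₂ : ℝ → ℝ → ℂ)
    (hχ₁ : ContDiff ℝ 2 (fun p : ℝ × ℝ => χ₁ p.1 p.2))
    (hχ₂ : ContDiff ℝ 2 (fun p : ℝ × ℝ => χ₂ p.1 p.2))
    (hz1 : ∀ z τ : ℝ, deriv (fun z' => χ₁ z' τ) z = C z * χ₁ z τ + D z * χ₂ z τ)
    (hz2 : ∀ z τ : ℝ, deriv (fun z' => χ₂ z' τ) z =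
      -(starRingEnd ℂ) (D z) * χ₁ z τ - C z * χ₂ z τ)
    (ht1 : ∀ z τ : ℝ, deriv (fun τ' => χ₁ z τ') τ = A z * χ₁ z τ + B z * χ₂ z τ)
    (ht2 : ∀ z τ : ℝ, deriv (fun τ' => χ₂ z τ') τ =
      -(starRingEnd ℂ) (B z) * χ₁ z τ - A z * χ₂ z τ)
    (w : ℝ → ℝ → ℂ) (hw : ∀ z τ : ℝ, w z τ = χ₁ z τ ^ 2 + χ₂ z τ ^ 2) :
    ∀ z τ : ℝ,
      ((c : ℂ) ^ 2 - 1) * deriv (deriv (fun z' => w z' τ)) z -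
        2 * (c : ℂ) * deriv (fun z' => deriv (fun τ' => w z' τ') τ) z +
        deriv (deriv (fun τ' => w z τ')) τ +
        (Real.cos (f z) : ℂ) * w z τ = 0 := by
  intro z τ
  have hζc : (ζ : ℂ) ≠ 0 := Complex.ofReal_ne_zero.mpr hζ
  have hzu : (ζ : ℂ) * (ζ : ℂ)⁻¹ = 1 := mul_inv_cancel₀ hζc
  -- differentiability of the partial maps of χ₁, χ₂
  have hd1z : ∀ t0 : ℝ, Differentiable ℝ (fun x => χ₁ x t0) := by
    intro t0
    have h := (hχ₁.differentiable two_ne_zero).comp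
      (differentiable_id.prodMk (differentiable_const t0))
    exact h
  have hd2z : ∀ t0 : ℝ, Differentiable ℝ (fun x => χ₂ x t0) := by
    intro t0
    have h := (hχ₂.differentiable two_ne_zero).comp
      (differentiable_id.prodMk (differentiable_const t0))
    exact h
  have hd1t : ∀ x : ℝ, Differentiable ℝ (fun t0 => χ₁ x t0) := by
    intro x
    have h := (hχ₁.differentiable two_ne_zero).comp
      ((differentiable_const x).prodMk differentiable_id)
    exact h
  have hd2t : ∀ x : ℝ, Differentiable ℝ (fun t0 => χ₂ x t0) := by
    intro x
    have h := (hχ₂.differentiable two_ne_zero).comp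
      ((differentiable_const x).prodMk differentiable_id)
    exact h
  -- derivatives of the scalar building blocks
  have hsD : ∀ x : ℝ, HasDerivAt (fun y : ℝ => ((Real.sin (f y) : ℝ) : ℂ))
      ((Real.cos (f x) * deriv f x : ℝ) : ℂ) x := fun x =>
    HasDerivAt.ofReal_comp ((Real.hasDerivAt_sin (f x)).comp x (hf x).hasDerivAt)
  have hkD : ∀ x : ℝ, HasDerivAt (fun y : ℝ => ((Real.cos (f y) : ℝ) : ℂ))
      ((-Real.sin (f x) * deriv f x : ℝ) : ℂ) x := fun x =>
    HasDerivAt.ofReal_comp ((Real.hasDerivAt_cos (f x)).comp x (hf x).hasDerivAt)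
  have hpD : ∀ x : ℝ, HasDerivAt (fun y : ℝ => ((deriv f y : ℝ) : ℂ))
      ((deriv (deriv f) x : ℝ) : ℂ) x := fun x =>
    HasDerivAt.ofReal_comp (hf' x).hasDerivAt
  -- derivatives of the coefficient functions
  have hCd : ∀ x : ℝ, HasDerivAt C
      (Complex.I * ((-Real.sin (f x) * deriv f x : ℝ) : ℂ) / (8 * (ζ : ℂ))) x := by
    intro x
    rw [show C = fun z : ℝ => -Complex.I * (ζ : ℂ) / 2 +
      Complex.I * ((Real.cos (f z) : ℝ) : ℂ) / (8 * (ζ : ℂ)) from funext hC]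
    exact (((hkD x).const_mul Complex.I).div_const (8 * (ζ : ℂ))).const_add
      (-Complex.I * (ζ : ℂ) / 2)
  have hDd : ∀ x : ℝ, HasDerivAt D
      (Complex.I * ((Real.cos (f x) * deriv f x : ℝ) : ℂ) / (8 * (ζ : ℂ)) +
        ((c : ℂ) - 1) * ((deriv (deriv f) x : ℝ) : ℂ) / 4) x := by
    intro x
    rw [show D = fun z : ℝ => Complex.I * ((Real.sin (f z) : ℝ) : ℂ) / (8 * (ζ : ℂ)) +
      ((c : ℂ) - 1) * ((deriv f z : ℝ) : ℂ) / 4 from funext hD]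
    exact (((hsD x).const_mul Complex.I).div_const (8 * (ζ : ℂ))).add
      (((hpD x).const_mul ((c : ℂ) - 1)).div_const 4)
  have hDb : ∀ x : ℝ, (starRingEnd ℂ) (D x) =
      -(Complex.I * ((Real.sin (f x) : ℝ) : ℂ)) / (8 * (ζ : ℂ)) +
        ((c : ℂ) - 1) * ((deriv f x : ℝ) : ℂ) / 4 := by
    intro x
    rw [hD x]
    simp only [map_add, map_div₀, map_mul, map_sub, map_one, map_ofNat,
      Complex.conj_I, Complex.conj_ofReal]
    ring
  have hDbd : ∀ x : ℝ, HasDerivAt (fun y : ℝ => (starRingEnd ℂ) (D y))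
      (-(Complex.I * ((Real.cos (f x) * deriv f x : ℝ) : ℂ)) / (8 * (ζ : ℂ)) +
        ((c : ℂ) - 1) * ((deriv (deriv f) x : ℝ) : ℂ) / 4) x := by
    intro x
    rw [show (fun y : ℝ => (starRingEnd ℂ) (D y)) = fun y : ℝ =>
      -(Complex.I * ((Real.sin (f y) : ℝ) : ℂ)) / (8 * (ζ : ℂ)) +
        ((c : ℂ) - 1) * ((deriv f y : ℝ) : ℂ) / 4 from funext hDb]
    exact ((((hsD x).const_mul Complex.I).neg).div_const (8 * (ζ : ℂ))).add
      (((hpD x).const_mul ((c : ℂ) - 1)).div_const 4)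
  have hAd : ∀ x : ℝ, HasDerivAt A
      (-Complex.I * -(((c : ℂ) - 1) * ((-Real.sin (f x) * deriv f x : ℝ) : ℂ)) /
        (8 * (ζ : ℂ))) x := by
    intro x
    rw [show A = fun z : ℝ => -Complex.I * (4 * (1 + (c : ℂ)) * (ζ : ℂ) ^ 2 -
      ((c : ℂ) - 1) * ((Real.cos (f z) : ℝ) : ℂ)) / (8 * (ζ : ℂ)) from funext hA]
    exact ((((hkD x).const_mul ((c : ℂ) - 1)).const_sub
      (4 * (1 + (c : ℂ)) * (ζ : ℂ) ^ 2)).const_mul (-Complex.I)).div_const (8 * (ζ : ℂ))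
  have hBd : ∀ x : ℝ, HasDerivAt B
      (((c : ℂ) - 1) * (Complex.I * ((Real.cos (f x) * deriv f x : ℝ) : ℂ) +
        2 * ((c : ℂ) + 1) * (ζ : ℂ) * ((deriv (deriv f) x : ℝ) : ℂ)) / (8 * (ζ : ℂ))) x := by
    intro x
    rw [show B = fun z : ℝ => ((c : ℂ) - 1) * (Complex.I * ((Real.sin (f z) : ℝ) : ℂ) +
      2 * ((c : ℂ) + 1) * (ζ : ℂ) * ((deriv f z : ℝ) : ℂ)) / (8 * (ζ : ℂ)) from funext hB]
    exact ((((hsD x).const_mul Complex.I).add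
      ((hpD x).const_mul (2 * ((c : ℂ) + 1) * (ζ : ℂ)))).const_mul ((c : ℂ) - 1)).div_const
      (8 * (ζ : ℂ))
  have hBb : ∀ x : ℝ, (starRingEnd ℂ) (B x) =
      ((c : ℂ) - 1) * (-(Complex.I * ((Real.sin (f x) : ℝ) : ℂ)) +
        2 * ((c : ℂ) + 1) * (ζ : ℂ) * ((deriv f x : ℝ) : ℂ)) / (8 * (ζ : ℂ)) := by
    intro x
    rw [hB x]
    simp only [map_add, map_div₀, map_mul, map_sub, map_one, map_ofNat,
      Complex.conj_I, Complex.conj_ofReal]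
    ring
  have hBbd : ∀ x : ℝ, HasDerivAt (fun y : ℝ => (starRingEnd ℂ) (B y))
      (((c : ℂ) - 1) * (-(Complex.I * ((Real.cos (f x) * deriv f x : ℝ) : ℂ)) +
        2 * ((c : ℂ) + 1) * (ζ : ℂ) * ((deriv (deriv f) x : ℝ) : ℂ)) / (8 * (ζ : ℂ))) x := by
    intro x
    rw [show (fun y : ℝ => (starRingEnd ℂ) (B y)) = fun y : ℝ =>
      ((c : ℂ) - 1) * (-(Complex.I * ((Real.sin (f y) : ℝ) : ℂ)) +
        2 * ((c : ℂ) + 1) * (ζ : ℂ) * ((deriv f y : ℝ) : ℂ)) / (8 * (ζ : ℂ)) from funext hBb]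
    exact (((((hsD x).const_mul Complex.I).neg).add
      ((hpD x).const_mul (2 * ((c : ℂ) + 1) * (ζ : ℂ)))).const_mul ((c : ℂ) - 1)).div_const
      (8 * (ζ : ℂ))
  -- derivatives of χ₁, χ₂ in each variable
  have hPz : ∀ x t0 : ℝ, HasDerivAt (fun y => χ₁ y t0)
      (C x * χ₁ x t0 + D x * χ₂ x t0) x := by
    intro x t0
    have h := ((hd1z t0) x).hasDerivAt
    rwa [hz1 x t0] at h
  have hQz : ∀ x t0 : ℝ, HasDerivAt (fun y => χ₂ y t0)
      (-(starRingEnd ℂ) (D x) * χ₁ x t0 - C x * χ₂ x t0) x := by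
    intro x t0
    have h := ((hd2z t0) x).hasDerivAt
    rwa [hz2 x t0] at h
  have hPt : ∀ x t0 : ℝ, HasDerivAt (fun t' => χ₁ x t')
      (A x * χ₁ x t0 + B x * χ₂ x t0) t0 := by
    intro x t0
    have h := ((hd1t x) t0).hasDerivAt
    rwa [ht1 x t0] at h
  have hQt : ∀ x t0 : ℝ, HasDerivAt (fun t' => χ₂ x t')
      (-(starRingEnd ℂ) (B x) * χ₁ x t0 - A x * χ₂ x t0) t0 := by
    intro x t0
    have h := ((hd2t x) t0).hasDerivAt
    rwa [ht2 x t0] at h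
  -- first-order derivative formulas for w
  have hwfz : ∀ t0 : ℝ, (fun y => w y t0) =
      fun y => χ₁ y t0 * χ₁ y t0 + χ₂ y t0 * χ₂ y t0 := by
    intro t0; funext y; rw [hw]; ring
  have hwft : ∀ x : ℝ, (fun t0 => w x t0) =
      fun t0 => χ₁ x t0 * χ₁ x t0 + χ₂ x t0 * χ₂ x t0 := by
    intro x; funext t0; rw [hw]; ring
  have hWz : ∀ x t0 : ℝ, deriv (fun y => w y t0) x =
      2 * χ₁ x t0 * (C x * χ₁ x t0 + D x * χ₂ x t0) +
        2 * χ₂ x t0 * (-(starRingEnd ℂ) (D x) * χ₁ x t0 - C x * χ₂ x t0) := by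
    intro x t0
    rw [hwfz t0]
    exact (((hPz x t0).mul (hPz x t0)).add ((hQz x t0).mul (hQz x t0))).deriv.trans (by ring)
  have hWt : ∀ x t0 : ℝ, deriv (fun t' => w x t') t0 =
      2 * χ₁ x t0 * (A x * χ₁ x t0 + B x * χ₂ x t0) +
        2 * χ₂ x t0 * (-(starRingEnd ℂ) (B x) * χ₁ x t0 - A x * χ₂ x t0) := by
    intro x t0
    rw [hwft x]
    exact (((hPt x t0).mul (hPt x t0)).add ((hQt x t0).mul (hQt x t0))).deriv.trans (by ring)
  -- second derivatives via explicit HasDerivAt witnesses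
  have H1 := (((hPz z τ).const_mul (2 : ℂ)).mul
      (((hCd z).mul (hPz z τ)).add ((hDd z).mul (hQz z τ)))).add
    (((hQz z τ).const_mul (2 : ℂ)).mul
      ((((hDbd z).neg).mul (hPz z τ)).sub ((hCd z).mul (hQz z τ))))
  have H2 := (((hPz z τ).const_mul (2 : ℂ)).mul
      (((hAd z).mul (hPz z τ)).add ((hBd z).mul (hQz z τ)))).add
    (((hQz z τ).const_mul (2 : ℂ)).mul
      ((((hBbd z).neg).mul (hPz z τ)).sub ((hAd z).mul (hQz z τ))))
  have H3 := (((hPt z τ).const_mul (2 : ℂ)).mul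
      (((hPt z τ).const_mul (A z)).add ((hQt z τ).const_mul (B z)))).add
    (((hQt z τ).const_mul (2 : ℂ)).mul
      (((hPt z τ).const_mul (-(starRingEnd ℂ) (B z))).sub ((hQt z τ).const_mul (A z))))
  replace H1 : HasDerivAt (fun x => 2 * χ₁ x τ * (C x * χ₁ x τ + D x * χ₂ x τ) +
      2 * χ₂ x τ * (-(starRingEnd ℂ) (D x) * χ₁ x τ - C x * χ₂ x τ)) _ z := H1
  replace H2 : HasDerivAt (fun x => 2 * χ₁ x τ * (A x * χ₁ x τ + B x * χ₂ x τ) +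
      2 * χ₂ x τ * (-(starRingEnd ℂ) (B x) * χ₁ x τ - A x * χ₂ x τ)) _ z := H2
  replace H3 : HasDerivAt (fun t0 => 2 * χ₁ z t0 * (A z * χ₁ z t0 + B z * χ₂ z t0) +
      2 * χ₂ z t0 * (-(starRingEnd ℂ) (B z) * χ₁ z t0 - A z * χ₂ z t0)) _ τ := H3
  simp only [Pi.mul_apply, Pi.add_apply, Pi.sub_apply, Pi.neg_apply] at H1 H2 H3
  have hE1 : deriv (fun z' => w z' τ) = fun x =>
      2 * χ₁ x τ * (C x * χ₁ x τ + D x * χ₂ x τ) +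
        2 * χ₂ x τ * (-(starRingEnd ℂ) (D x) * χ₁ x τ - C x * χ₂ x τ) :=
    funext fun x => hWz x τ
  have hE2 : (fun z' => deriv (fun τ' => w z' τ') τ) = fun x =>
      2 * χ₁ x τ * (A x * χ₁ x τ + B x * χ₂ x τ) +
        2 * χ₂ x τ * (-(starRingEnd ℂ) (B x) * χ₁ x τ - A x * χ₂ x τ) :=
    funext fun x => hWt x τ
  have hE3 : deriv (fun τ' => w z τ') = fun t0 =>
      2 * χ₁ z t0 * (A z * χ₁ z t0 + B z * χ₂ z t0) +
        2 * χ₂ z t0 * (-(starRingEnd ℂ) (B z) * χ₁ z t0 - A z * χ₂ z t0) :=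
    funext fun t0 => hWt z t0
  rw [hE1, hE2, hE3, H1.deriv, H2.deriv, H3.deriv, hw z τ, hDb z, hBb z,
    hA z, hB z, hC z, hD z]
  simp only [Complex.ofReal_mul, Complex.ofReal_neg]
  linear_combination
    (((1:ℂ)/2)*((ζ:ℂ))*((ζ:ℂ)⁻¹)*(((Real.cos (f z) : ℝ) : ℂ))*(χ₂ z τ)^2 +
        ((1:ℂ)/2)*((ζ:ℂ))*((ζ:ℂ)⁻¹)*(((Real.cos (f z) : ℝ) : ℂ))*(χ₁ z τ)^2 +
        (-1:ℂ)*((ζ:ℂ))^2*(χ₂ z τ)^2 +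
        (-1:ℂ)*((ζ:ℂ))^2*(χ₁ z τ)^2 +
        ((1:ℂ)/2)*((ζ:ℂ))^2*((ζ:ℂ)⁻¹)^2*(((Real.cos (f z) : ℝ) : ℂ))*(χ₂ z τ)^2 +
        ((1:ℂ)/2)*((ζ:ℂ))^2*((ζ:ℂ)⁻¹)^2*(((Real.cos (f z) : ℝ) : ℂ))*(χ₁ z τ)^2 +
        (1:ℂ)*((ζ:ℂ))^4*((ζ:ℂ)⁻¹)^2*(χ₂ z τ)^2 +
        (1:ℂ)*((ζ:ℂ))^4*((ζ:ℂ)⁻¹)^2*(χ₁ z τ)^2 +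
        ((-1:ℂ)/2)*((c:ℂ))*((ζ:ℂ))*((ζ:ℂ)⁻¹)*(((Real.cos (f z) : ℝ) : ℂ))*(χ₂ z τ)^2 +
        ((-1:ℂ)/2)*((c:ℂ))*((ζ:ℂ))*((ζ:ℂ)⁻¹)*(((Real.cos (f z) : ℝ) : ℂ))*(χ₁ z τ)^2 +
        ((1:ℂ)/2)*((c:ℂ))*((ζ:ℂ))^2*((ζ:ℂ)⁻¹)^2*(((Real.cos (f z) : ℝ) : ℂ))*(χ₂ z τ)^2 +
        ((1:ℂ)/2)*((c:ℂ))*((ζ:ℂ))^2*((ζ:ℂ)⁻¹)^2*(((Real.cos (f z) : ℝ) : ℂ))*(χ₁ z τ)^2 +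
        (-2:ℂ)*((c:ℂ))*((ζ:ℂ))^3*((ζ:ℂ)⁻¹)*(χ₂ z τ)^2 +
        (-2:ℂ)*((c:ℂ))*((ζ:ℂ))^3*((ζ:ℂ)⁻¹)*(χ₁ z τ)^2 +
        (2:ℂ)*((c:ℂ))*((ζ:ℂ))^4*((ζ:ℂ)⁻¹)^2*(χ₂ z τ)^2 +
        (2:ℂ)*((c:ℂ))*((ζ:ℂ))^4*((ζ:ℂ)⁻¹)^2*(χ₁ z τ)^2 +
        (1:ℂ)*((c:ℂ))^2*((ζ:ℂ))^2*(χ₂ z τ)^2 +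
        (1:ℂ)*((c:ℂ))^2*((ζ:ℂ))^2*(χ₁ z τ)^2 +
        (-2:ℂ)*((c:ℂ))^2*((ζ:ℂ))^3*((ζ:ℂ)⁻¹)*(χ₂ z τ)^2 +
        (-2:ℂ)*((c:ℂ))^2*((ζ:ℂ))^3*((ζ:ℂ)⁻¹)*(χ₁ z τ)^2 +
        (1:ℂ)*((c:ℂ))^2*((ζ:ℂ))^4*((ζ:ℂ)⁻¹)^2*(χ₂ z τ)^2 +
        (1:ℂ)*((c:ℂ))^2*((ζ:ℂ))^4*((ζ:ℂ)⁻¹)^2*(χ₁ z τ)^2) * Complex.I_sq +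
    ((-1:ℂ)*(((Real.cos (f z) : ℝ) : ℂ))*(χ₂ z τ)^2 +
        (-1:ℂ)*(((Real.cos (f z) : ℝ) : ℂ))*(χ₁ z τ)^2 +
        ((-1:ℂ)/2)*((ζ:ℂ))*((ζ:ℂ)⁻¹)*(((Real.cos (f z) : ℝ) : ℂ))*(χ₂ z τ)^2 +
        ((-1:ℂ)/2)*((ζ:ℂ))*((ζ:ℂ)⁻¹)*(((Real.cos (f z) : ℝ) : ℂ))*(χ₁ z τ)^2 +
        (-1:ℂ)*((ζ:ℂ))^2*(χ₂ z τ)^2 +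
        (-1:ℂ)*((ζ:ℂ))^2*(χ₁ z τ)^2 +
        (-1:ℂ)*((ζ:ℂ))^3*((ζ:ℂ)⁻¹)*(χ₂ z τ)^2 +
        (-1:ℂ)*((ζ:ℂ))^3*((ζ:ℂ)⁻¹)*(χ₁ z τ)^2 +
        ((-1:ℂ)/2)*((c:ℂ))*((ζ:ℂ))*((ζ:ℂ)⁻¹)*(((Real.cos (f z) : ℝ) : ℂ))*(χ₂ z τ)^2 +
        ((-1:ℂ)/2)*((c:ℂ))*((ζ:ℂ))*((ζ:ℂ)⁻¹)*(((Real.cos (f z) : ℝ) : ℂ))*(χ₁ z τ)^2 +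
        (-2:ℂ)*((c:ℂ))*((ζ:ℂ))^3*((ζ:ℂ)⁻¹)*(χ₂ z τ)^2 +
        (-2:ℂ)*((c:ℂ))*((ζ:ℂ))^3*((ζ:ℂ)⁻¹)*(χ₁ z τ)^2 +
        (1:ℂ)*((c:ℂ))^2*((ζ:ℂ))^2*(χ₂ z τ)^2 +
        (1:ℂ)*((c:ℂ))^2*((ζ:ℂ))^2*(χ₁ z τ)^2 +
        (-1:ℂ)*((c:ℂ))^2*((ζ:ℂ))^3*((ζ:ℂ)⁻¹)*(χ₂ z τ)^2 +
        (-1:ℂ)*((c:ℂ))^2*((ζ:ℂ))^3*((ζ:ℂ)⁻¹)*(χ₁ z τ)^2 +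
        ((1:ℂ)/4)*(Complex.I)*((ζ:ℂ)⁻¹)*(((Real.cos (f z) : ℝ) : ℂ))*(((deriv f z : ℝ) : ℂ))*(χ₁ z τ)*(χ₂ z τ) +
        ((1:ℂ)/8)*(Complex.I)*((ζ:ℂ)⁻¹)*(((Real.sin (f z) : ℝ) : ℂ))*(((deriv f z : ℝ) : ℂ))*(χ₂ z τ)^2 +
        ((-1:ℂ)/8)*(Complex.I)*((ζ:ℂ)⁻¹)*(((Real.sin (f z) : ℝ) : ℂ))*(((deriv f z : ℝ) : ℂ))*(χ₁ z τ)^2 +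
        (1:ℂ)*(Complex.I)*((ζ:ℂ))*(((deriv f z : ℝ) : ℂ))*(χ₁ z τ)*(χ₂ z τ) +
        (1:ℂ)*(Complex.I)*((ζ:ℂ))^2*((ζ:ℂ)⁻¹)*(((deriv f z : ℝ) : ℂ))*(χ₁ z τ)*(χ₂ z τ) +
        ((-1:ℂ)/4)*(Complex.I)*((c:ℂ))*((ζ:ℂ)⁻¹)*(((Real.cos (f z) : ℝ) : ℂ))*(((deriv f z : ℝ) : ℂ))*(χ₁ z τ)*(χ₂ z τ) +
        ((-1:ℂ)/8)*(Complex.I)*((c:ℂ))*((ζ:ℂ)⁻¹)*(((Real.sin (f z) : ℝ) : ℂ))*(((deriv f z : ℝ) : ℂ))*(χ₂ z τ)^2 +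
        ((1:ℂ)/8)*(Complex.I)*((c:ℂ))*((ζ:ℂ)⁻¹)*(((Real.sin (f z) : ℝ) : ℂ))*(((deriv f z : ℝ) : ℂ))*(χ₁ z τ)^2 +
        (-1:ℂ)*(Complex.I)*((c:ℂ))*((ζ:ℂ))*(((deriv f z : ℝ) : ℂ))*(χ₁ z τ)*(χ₂ z τ) +
        (1:ℂ)*(Complex.I)*((c:ℂ))*((ζ:ℂ))^2*((ζ:ℂ)⁻¹)*(((deriv f z : ℝ) : ℂ))*(χ₁ z τ)*(χ₂ z τ) +
        ((-1:ℂ)/4)*(Complex.I)*((c:ℂ))^2*((ζ:ℂ)⁻¹)*(((Real.cos (f z) : ℝ) : ℂ))*(((deriv f z : ℝ) : ℂ))*(χ₁ z τ)*(χ₂ z τ) +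
        ((-1:ℂ)/8)*(Complex.I)*((c:ℂ))^2*((ζ:ℂ)⁻¹)*(((Real.sin (f z) : ℝ) : ℂ))*(((deriv f z : ℝ) : ℂ))*(χ₂ z τ)^2 +
        ((1:ℂ)/8)*(Complex.I)*((c:ℂ))^2*((ζ:ℂ)⁻¹)*(((Real.sin (f z) : ℝ) : ℂ))*(((deriv f z : ℝ) : ℂ))*(χ₁ z τ)^2 +
        (-1:ℂ)*(Complex.I)*((c:ℂ))^2*((ζ:ℂ))*(((deriv f z : ℝ) : ℂ))*(χ₁ z τ)*(χ₂ z τ) +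
        (-1:ℂ)*(Complex.I)*((c:ℂ))^2*((ζ:ℂ))^2*((ζ:ℂ)⁻¹)*(((deriv f z : ℝ) : ℂ))*(χ₁ z τ)*(χ₂ z τ) +
        ((1:ℂ)/4)*(Complex.I)*((c:ℂ))^3*((ζ:ℂ)⁻¹)*(((Real.cos (f z) : ℝ) : ℂ))*(((deriv f z : ℝ) : ℂ))*(χ₁ z τ)*(χ₂ z τ) +
        ((1:ℂ)/8)*(Complex.I)*((c:ℂ))^3*((ζ:ℂ)⁻¹)*(((Real.sin (f z) : ℝ) : ℂ))*(((deriv f z : ℝ) : ℂ))*(χ₂ z τ)^2 +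
        ((-1:ℂ)/8)*(Complex.I)*((c:ℂ))^3*((ζ:ℂ)⁻¹)*(((Real.sin (f z) : ℝ) : ℂ))*(((deriv f z : ℝ) : ℂ))*(χ₁ z τ)^2 +
        (1:ℂ)*(Complex.I)*((c:ℂ))^3*((ζ:ℂ))*(((deriv f z : ℝ) : ℂ))*(χ₁ z τ)*(χ₂ z τ) +
        (-1:ℂ)*(Complex.I)*((c:ℂ))^3*((ζ:ℂ))^2*((ζ:ℂ)⁻¹)*(((deriv f z : ℝ) : ℂ))*(χ₁ z τ)*(χ₂ z τ)) * hzu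
end

section
/- Let U ⊆ ℂ be open, f : ℂ → ℂ holomorphic on U, and let γ : (a,b) → U be continuously differentiable with γ'(t) ≠ 0 and (deriv f)(γ(t)) ≠ 0 for all t ∈ (a,b). If the function t ↦ Re(f(γ(t))) is constant on (a,b), then the function t ↦ Im(f(γ(t))) is strictly monotone on (a,b). -/
/-- Along a C¹ regular contour avoiding critical points of a holomorphic function `f`,
if `Re ∘ f ∘ γ` is constant then `Im ∘ f ∘ γ` is strictly monotone. -/
theorem im_strictMono_of_re_const_along_contour
    (U : Set ℂ) (hU : IsOpen U) (f : ℂ → ℂ) (hf : DifferentiableOn ℂ f U)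
    (a b : ℝ) (γ γ' : ℝ → ℂ)
    (hγmem : ∀ t ∈ Set.Ioo a b, γ t ∈ U)
    (hγderiv : ∀ t ∈ Set.Ioo a b, HasDerivAt γ (γ' t) t)
    (hγ'cont : ContinuousOn γ' (Set.Ioo a b))
    (hγ'ne : ∀ t ∈ Set.Ioo a b, γ' t ≠ 0)
    (hfderiv_ne : ∀ t ∈ Set.Ioo a b, deriv f (γ t) ≠ 0)
    (hre_const : ∀ s ∈ Set.Ioo a b, ∀ t ∈ Set.Ioo a b, (f (γ s)).re = (f (γ t)).re) :
    StrictMonoOn (fun t => (f (γ t)).im) (Set.Ioo a b) ∨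
      StrictAntiOn (fun t => (f (γ t)).im) (Set.Ioo a b) := by
  set c : ℝ → ℂ := fun t => deriv f (γ t) * γ' t with hc
  set h : ℝ → ℝ := fun t => (c t).im with hh
  have hcont_γ : ContinuousOn γ (Set.Ioo a b) := fun t ht =>
    (hγderiv t ht).continuousAt.continuousWithinAt
  -- derivative of g = f ∘ γ
  have hgd : ∀ t ∈ Set.Ioo a b, HasDerivAt (fun s => f (γ s)) (c t) t := by
    intro t ht
    have hfz : HasDerivAt f (deriv f (γ t)) (γ t) :=
      (hf.differentiableAt (hU.mem_nhds (hγmem t ht))).hasDerivAt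
    have := hfz.scomp t (hγderiv t ht)
    simpa [hc, smul_eq_mul, mul_comm, Function.comp_def] using this
  -- derivative of Im ∘ g and Re ∘ g
  have him_d : ∀ t ∈ Set.Ioo a b, HasDerivAt (fun s => (f (γ s)).im) (h t) t := by
    intro t ht
    exact (Complex.imCLM.hasFDerivAt.comp_hasDerivAt t (hgd t ht))
  have hre0 : ∀ t ∈ Set.Ioo a b, (c t).re = 0 := by
    intro t ht
    have h1 : HasDerivAt (fun s => (f (γ s)).re) ((c t).re) t :=
      (Complex.reCLM.hasFDerivAt.comp_hasDerivAt t (hgd t ht))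
    have heq : (fun s => (f (γ s)).re) =ᶠ[nhds t] fun _ => (f (γ t)).re := by
      filter_upwards [isOpen_Ioo.mem_nhds ht] with s hs
      exact hre_const s hs t ht
    have h2 : HasDerivAt (fun s => (f (γ s)).re) 0 t :=
      (hasDerivAt_const t ((f (γ t)).re)).congr_of_eventuallyEq heq
    exact h1.unique h2
  have hne : ∀ t ∈ Set.Ioo a b, h t ≠ 0 := by
    intro t ht h0
    have : c t ≠ 0 := mul_ne_zero (hfderiv_ne t ht) (hγ'ne t ht)
    exact this (Complex.ext (hre0 t ht) h0)
  -- continuity of h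
  have hderiv_cont : ContinuousOn (fun t => deriv f (γ t)) (Set.Ioo a b) :=
    ((hf.analyticOnNhd hU).deriv.continuousOn).comp hcont_γ hγmem
  have hcont : ContinuousOn h (Set.Ioo a b) :=
    Complex.continuous_im.comp_continuousOn (hderiv_cont.mul hγ'cont)
  -- constant sign of h on Ioo
  have hsign : (∀ t ∈ Set.Ioo a b, 0 < h t) ∨ (∀ t ∈ Set.Ioo a b, h t < 0) := by
    by_cases hpos : ∀ t ∈ Set.Ioo a b, 0 < h t
    · exact Or.inl hpos
    · right
      push_neg at hpos
      obtain ⟨t₀, ht₀, hle⟩ := hpos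
      have hneg : h t₀ < 0 := lt_of_le_of_ne hle (hne t₀ ht₀)
      intro t ht
      by_contra hge
      push_neg at hge
      have hgt : 0 < h t := lt_of_le_of_ne hge (Ne.symm (hne t ht))
      have hsub : Set.uIcc t₀ t ⊆ Set.Ioo a b :=
        Set.ordConnected_Ioo.uIcc_subset ht₀ ht
      have h0mem : (0 : ℝ) ∈ Set.uIcc (h t₀) (h t) :=
        Set.mem_uIcc.2 (Or.inl ⟨le_of_lt hneg, le_of_lt hgt⟩)
      obtain ⟨s, hs, hs0⟩ := intermediate_value_uIcc (hcont.mono hsub) h0mem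
      exact hne s (hsub hs) hs0
  have hcont_im : ContinuousOn (fun t => (f (γ t)).im) (Set.Ioo a b) := fun t ht =>
    (him_d t ht).continuousAt.continuousWithinAt
  have hderiv_eq : ∀ t ∈ Set.Ioo a b, deriv (fun s => (f (γ s)).im) t = h t :=
    fun t ht => (him_d t ht).deriv
  rcases hsign with hp | hn
  · left
    apply strictMonoOn_of_deriv_pos (convex_Ioo a b) hcont_im
    intro x hx
    rw [interior_Ioo] at hx
    rw [hderiv_eq x hx]
    exact hp x hx
  · right
    apply strictAntiOn_of_deriv_neg (convex_Ioo a b) hcont_im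
    intro x hx
    rw [interior_Ioo] at hx
    rw [hderiv_eq x hx]
    exact hn x hx
end

section
/- Let c ∈ ℝ, ζ ∈ ℝ with ζ ≠ 0, and let f : ℝ → ℝ be twice differentiable satisfying (c²−1)·f''(z) + sin(f(z)) = 0 for all z. Define the 2×2 complex matrices M(z) with rows [C(z), D(z)] and [−conj(D(z)), −C(z)], and N(z) with rows [A(z), B(z)] and [−conj(B(z)), −A(z)], where A(z) = −i(4(1+c)ζ² − (c−1)cos(f(z)))/(8ζ), B(z) = (c−1)(i·sin(f(z)) + 2(c+1)ζ·f'(z))/(8ζ), C(z) = −iζ/2 + i·cos(f(z))/(8ζ), D(z) = i·sin(f(z))/(8ζ) + (c−1)·f'(z)/4. Then the zero-curvature (compatibility) condition N'(z) = M(z)·N(z) − N(z)·M(z) holds for all z ∈ ℝ. -/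
open Complex

set_option maxHeartbeats 1000000 in
/-- Zero-curvature (compatibility) condition for the traveling-frame sine-Gordon Lax pair:
with `χ_z = M(z)χ`, `χ_τ = N(z)χ`, one has `N'(z) = M(z)N(z) − N(z)M(z)` along any
stationary solution `f` of the pendulum equation `(c²−1)f'' + sin f = 0`. -/
theorem lax_pair_zero_curvature_stationary
    (c ζ : ℝ) (hζ : ζ ≠ 0)
    (f : ℝ → ℝ) (hf : Differentiable ℝ f) (hf' : Differentiable ℝ (deriv f))
    (hode : ∀ z : ℝ, (c ^ 2 - 1) * deriv (deriv f) z + Real.sin (f z) = 0)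
    (A B C D : ℝ → ℂ)
    (hA : ∀ z : ℝ, A z = -Complex.I * (4 * (1 + (c : ℂ)) * (ζ : ℂ) ^ 2 -
      ((c : ℂ) - 1) * (Real.cos (f z) : ℂ)) / (8 * (ζ : ℂ)))
    (hB : ∀ z : ℝ, B z = ((c : ℂ) - 1) * (Complex.I * (Real.sin (f z) : ℂ) +
      2 * ((c : ℂ) + 1) * (ζ : ℂ) * ((deriv f z : ℝ) : ℂ)) / (8 * (ζ : ℂ)))
    (hC : ∀ z : ℝ, C z = -Complex.I * (ζ : ℂ) / 2 +
      Complex.I * (Real.cos (f z) : ℂ) / (8 * (ζ : ℂ)))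
    (hD : ∀ z : ℝ, D z = Complex.I * (Real.sin (f z) : ℂ) / (8 * (ζ : ℂ)) +
      ((c : ℂ) - 1) * ((deriv f z : ℝ) : ℂ) / 4)
    (M N : ℝ → Matrix (Fin 2) (Fin 2) ℂ)
    (hM : ∀ z : ℝ, M z = !![C z, D z; -(starRingEnd ℂ) (D z), -C z])
    (hN : ∀ z : ℝ, N z = !![A z, B z; -(starRingEnd ℂ) (B z), -A z]) :
    ∀ z : ℝ, ∀ i j : Fin 2,
      HasDerivAt (fun z' => N z' i j) ((M z * N z - N z * M z) i j) z := by
  intro z i j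
  set s : ℝ := Real.sin (f z) with hs_def
  set co : ℝ := Real.cos (f z) with hco_def
  set p : ℝ := deriv f z with hp_def
  set p2 : ℝ := deriv (deriv f) z with hp2_def
  have hodeR : (c ^ 2 - 1) * p2 = -s := by linarith [hode z]
  have hodeC : ((c : ℂ) ^ 2 - 1) * (p2 : ℂ) = -(s : ℂ) := by exact_mod_cast hodeR
  have hfd : HasDerivAt f p z := (hf z).hasDerivAt
  have hfd2 : HasDerivAt (deriv f) p2 z := (hf' z).hasDerivAt
  have hsd : HasDerivAt (fun z' => ((Real.sin (f z') : ℝ) : ℂ)) ((co * p : ℝ) : ℂ) z :=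
    (((Real.hasDerivAt_sin (f z)).comp z hfd).ofReal_comp)
  have hcd : HasDerivAt (fun z' => ((Real.cos (f z') : ℝ) : ℂ)) ((-s * p : ℝ) : ℂ) z :=
    (((Real.hasDerivAt_cos (f z)).comp z hfd).ofReal_comp)
  have hpd : HasDerivAt (fun z' => ((deriv f z' : ℝ) : ℂ)) ((p2 : ℝ) : ℂ) z :=
    hfd2.ofReal_comp
  have comb : ∀ a b d e : ℂ, HasDerivAt
      (fun z' => a * ((Real.sin (f z') : ℝ) : ℂ) + b * ((Real.cos (f z') : ℝ) : ℂ)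
        + d * ((deriv f z' : ℝ) : ℂ) + e)
      (a * ((co * p : ℝ) : ℂ) + b * ((-s * p : ℝ) : ℂ) + d * ((p2 : ℝ) : ℂ)) z := by
    intro a b d e
    simpa using (((hsd.const_mul a).add (hcd.const_mul b)).add (hpd.const_mul d)).add_const e
  have hζC : (ζ : ℂ) ≠ 0 := Complex.ofReal_ne_zero.mpr hζ
  have hBc : (starRingEnd ℂ) (B z) = ((c : ℂ) - 1) * (-Complex.I * (s : ℂ) +
      2 * ((c : ℂ) + 1) * (ζ : ℂ) * (p : ℂ)) / (8 * (ζ : ℂ)) := by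
    simp only [hB, map_div₀, map_mul, map_add, map_sub, map_one, map_ofNat,
      Complex.conj_ofReal, Complex.conj_I, ← hs_def, ← hp_def]
    try ring
  have hDc : (starRingEnd ℂ) (D z) = -Complex.I * (s : ℂ) / (8 * (ζ : ℂ)) +
      ((c : ℂ) - 1) * (p : ℂ) / 4 := by
    simp only [hD, map_div₀, map_mul, map_add, map_sub, map_one, map_ofNat,
      Complex.conj_ofReal, Complex.conj_I, ← hs_def, ← hp_def]
    try ring
  have h00 : HasDerivAt (fun z' => N z' 0 0) ((M z * N z - N z * M z) 0 0) z := by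
    -- (0,0): N z' 0 0 = A z'
    have hfun : (fun z' => N z' 0 0) = (fun z' =>
        (0 : ℂ) * ((Real.sin (f z') : ℝ) : ℂ) +
        (Complex.I * ((c:ℂ)-1) / (8*(ζ:ℂ))) * ((Real.cos (f z') : ℝ) : ℂ) +
        0 * ((deriv f z' : ℝ) : ℂ) +
        (-Complex.I * (4 * (1 + (c:ℂ)) * (ζ:ℂ)^2) / (8*(ζ:ℂ)))) := by
      funext z'
      simp only [hN, Matrix.cons_val', Matrix.cons_val_zero, Matrix.empty_val',
        Matrix.cons_val_fin_one, Matrix.of_apply, hA]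
      field_simp
      ring
    simp only [hfun]
    convert comb _ _ _ _ using 1
    simp only [hM, hN, Matrix.mul_apply, Fin.sum_univ_two, Matrix.sub_apply,
      Matrix.cons_val', Matrix.cons_val_zero, Matrix.cons_val_one, Matrix.head_cons,
      Matrix.empty_val', Matrix.cons_val_fin_one, Matrix.head_fin_const, Matrix.of_apply]
    try rw [hBc]
    try rw [hDc]
    simp only [hA z, hB z, hC z, hD z, ← hs_def, ← hco_def, ← hp_def,
      Complex.ofReal_mul, Complex.ofReal_neg]
    field_simp
    try ring
    try field_simp
    try ring
  have h01 : HasDerivAt (fun z' => N z' 0 1) ((M z * N z - N z * M z) 0 1) z := by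
    -- (0,1): N z' 0 1 = B z'
    have hfun : (fun z' => N z' 0 1) = (fun z' =>
        ((((c:ℂ)-1) * Complex.I / (8*(ζ:ℂ)) : ℂ)) * ((Real.sin (f z') : ℝ) : ℂ) +
        0 * ((Real.cos (f z') : ℝ) : ℂ) +
        (((c:ℂ)-1) * (2 * ((c:ℂ)+1) * (ζ:ℂ)) / (8*(ζ:ℂ))) * ((deriv f z' : ℝ) : ℂ) +
        0) := by
      funext z'
      simp only [hN, Matrix.cons_val', Matrix.cons_val_zero, Matrix.cons_val_one,
        Matrix.head_cons, Matrix.empty_val', Matrix.cons_val_fin_one, Matrix.of_apply, hB]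
      field_simp
      ring
    simp only [hfun]
    convert comb _ _ _ _ using 1
    simp only [hM, hN, Matrix.mul_apply, Fin.sum_univ_two, Matrix.sub_apply,
      Matrix.cons_val', Matrix.cons_val_zero, Matrix.cons_val_one, Matrix.head_cons,
      Matrix.empty_val', Matrix.cons_val_fin_one, Matrix.head_fin_const, Matrix.of_apply]
    try rw [hBc]
    try rw [hDc]
    simp only [hA z, hB z, hC z, hD z, ← hs_def, ← hco_def, ← hp_def,
      Complex.ofReal_mul, Complex.ofReal_neg]
    field_simp
    try ring
    try field_simp
    try ring
    linear_combination (-128 * (ζ:ℂ)) * hodeC + (128 * (ζ:ℂ) * (s:ℂ)) * Complex.I_sq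
  have h10 : HasDerivAt (fun z' => N z' 1 0) ((M z * N z - N z * M z) 1 0) z := by
    -- (1,0): N z' 1 0 = -conj (B z')
    have hBc' : ∀ z', (starRingEnd ℂ) (B z') = ((c : ℂ) - 1) *
        (-Complex.I * ((Real.sin (f z') : ℝ) : ℂ) +
        2 * ((c : ℂ) + 1) * (ζ : ℂ) * ((deriv f z' : ℝ) : ℂ)) / (8 * (ζ : ℂ)) := by
      intro z'
      simp only [hB, map_div₀, map_mul, map_add, map_sub, map_one, map_ofNat,
        Complex.conj_ofReal, Complex.conj_I]
      try ring
    have hfun : (fun z' => N z' 1 0) = (fun z' =>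
        ((((c:ℂ)-1) * Complex.I / (8*(ζ:ℂ)) : ℂ)) * ((Real.sin (f z') : ℝ) : ℂ) +
        0 * ((Real.cos (f z') : ℝ) : ℂ) +
        (-(((c:ℂ)-1) * (2 * ((c:ℂ)+1) * (ζ:ℂ)) / (8*(ζ:ℂ)))) * ((deriv f z' : ℝ) : ℂ) +
        0) := by
      funext z'
      simp only [hN, Matrix.cons_val', Matrix.cons_val_zero, Matrix.cons_val_one,
        Matrix.head_cons, Matrix.empty_val', Matrix.cons_val_fin_one, Matrix.of_apply,
        hBc' z']
      field_simp
      ring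
    simp only [hfun]
    convert comb _ _ _ _ using 1
    simp only [hM, hN, Matrix.mul_apply, Fin.sum_univ_two, Matrix.sub_apply,
      Matrix.cons_val', Matrix.cons_val_zero, Matrix.cons_val_one, Matrix.head_cons,
      Matrix.empty_val', Matrix.cons_val_fin_one, Matrix.head_fin_const, Matrix.of_apply]
    try rw [hBc]
    try rw [hDc]
    simp only [hA z, hB z, hC z, hD z, ← hs_def, ← hco_def, ← hp_def,
      Complex.ofReal_mul, Complex.ofReal_neg]
    field_simp
    try ring
    try field_simp
    try ring
    linear_combination (128 * (ζ:ℂ)) * hodeC + (-128 * (ζ:ℂ) * (s:ℂ)) * Complex.I_sq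
  have h11 : HasDerivAt (fun z' => N z' 1 1) ((M z * N z - N z * M z) 1 1) z := by
    -- (1,1): N z' 1 1 = -A z'
    have hfun : (fun z' => N z' 1 1) = (fun z' =>
        (0 : ℂ) * ((Real.sin (f z') : ℝ) : ℂ) +
        (-(Complex.I * ((c:ℂ)-1) / (8*(ζ:ℂ)))) * ((Real.cos (f z') : ℝ) : ℂ) +
        0 * ((deriv f z' : ℝ) : ℂ) +
        (Complex.I * (4 * (1 + (c:ℂ)) * (ζ:ℂ)^2) / (8*(ζ:ℂ)))) := by
      funext z'
      simp only [hN, Matrix.cons_val', Matrix.cons_val_zero, Matrix.cons_val_one,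
        Matrix.head_cons, Matrix.empty_val', Matrix.cons_val_fin_one, Matrix.of_apply, hA]
      field_simp
      ring
    simp only [hfun]
    convert comb _ _ _ _ using 1
    simp only [hM, hN, Matrix.mul_apply, Fin.sum_univ_two, Matrix.sub_apply,
      Matrix.cons_val', Matrix.cons_val_zero, Matrix.cons_val_one, Matrix.head_cons,
      Matrix.empty_val', Matrix.cons_val_fin_one, Matrix.head_fin_const, Matrix.of_apply]
    try rw [hBc]
    try rw [hDc]
    simp only [hA z, hB z, hC z, hD z, ← hs_def, ← hco_def, ← hp_def,
      Complex.ofReal_mul, Complex.ofReal_neg]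
    field_simp
    try ring
    try field_simp
    try ring
  fin_cases i <;> fin_cases j <;> [exact h00; exact h01; exact h10; exact h11]
end

section
/- Let c, E ∈ ℝ, let ζ ∈ ℝ with ζ ≠ 0, and let F, P ∈ ℝ satisfy the energy relation (1/2)(c²−1)P² + 1 − cos F = E. Define A = −i(4(1+c)ζ² − (c−1)cos F)/(8ζ) and B = (c−1)(i·sin F + 2(c+1)ζ·P)/(8ζ). Then A² − B·conj(B) = (1/64)·(−8(c²−1)(E−1) − (c−1)²/ζ² − 16(c+1)²ζ²). In particular, along any stationary solution f(z) with energy E, the quantity Ω² = A² − B·conj(B) is independent of z. -/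
open Complex

/-- For `F, P` satisfying the energy relation `(1/2)(c²−1)P² + 1 − cos F = E`, the
determinant quantity `A² − B·conj(B)` from the τ-part of the sine-Gordon Lax pair
equals `(1/64)(−8(c²−1)(E−1) − (c−1)²/ζ² − 16(c+1)²ζ²)`. -/
theorem lax_determinant_identity (c E ζ F P : ℝ) (hζ : ζ ≠ 0)
    (henergy : (1 / 2 : ℝ) * (c ^ 2 - 1) * P ^ 2 + 1 - Real.cos F = E)
    (A B : ℂ)
    (hA : A = -Complex.I * (4 * (1 + (c : ℂ)) * (ζ : ℂ) ^ 2 - ((c : ℂ) - 1) * Real.cos F) /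
      (8 * (ζ : ℂ)))
    (hB : B = ((c : ℂ) - 1) * (Complex.I * Real.sin F + 2 * ((c : ℂ) + 1) * (ζ : ℂ) * (P : ℂ)) /
      (8 * (ζ : ℂ))) :
    A ^ 2 - B * (starRingEnd ℂ) B =
      (1 / 64 : ℂ) * (-8 * ((c : ℂ) ^ 2 - 1) * ((E : ℂ) - 1) - ((c : ℂ) - 1) ^ 2 / (ζ : ℂ) ^ 2 -
        16 * ((c : ℂ) + 1) ^ 2 * (ζ : ℂ) ^ 2) := by
  subst hA hB henergy
  have hζ' : (ζ : ℂ) ≠ 0 := by exact_mod_cast hζ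
  have hs : Complex.sin (F : ℂ) ^ 2 + Complex.cos (F : ℂ) ^ 2 = 1 :=
    Complex.sin_sq_add_cos_sq _
  simp only [map_div₀, map_mul, map_sub, map_add, Complex.conj_I, Complex.conj_ofReal,
    map_ofNat, map_pow, map_one]
  push_cast
  field_simp
  linear_combination
    (128 *
        ((4 * (1 + (c : ℂ)) * (ζ : ℂ) ^ 2 - ((c : ℂ) - 1) * Complex.cos (F : ℂ)) ^ 2 +
          ((c : ℂ) - 1) ^ 2 * Complex.sin (F : ℂ) ^ 2)) * Complex.I_sq -
    (128 * ((c : ℂ) - 1) ^ 2) * hs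
end

section
/- Let c, E ∈ ℝ and define Ω²(ζ) = (1/64)·(−8(c²−1)(E−1) − (c−1)²/ζ² − 16(c+1)²ζ²) for ζ ≠ 0. Then for every real ζ ≠ 0 one has the identity Ω²(ζ) = −(1/64)·((−4(1+c)ζ + (c−1)/ζ)² + 8E(c²−1)). Consequently, if c² > 1 and E ≥ 0 (the superluminal case), then Ω²(ζ) ≤ 0 for all real ζ ≠ 0. -/
/-- For real `ζ ≠ 0`, `Ω²(ζ) = −(1/64)((−4(1+c)ζ + (c−1)/ζ)² + 8E(c²−1))`; hence in the
superluminal case `c² > 1`, `E ≥ 0`, one has `Ω²(ζ) ≤ 0` for all real `ζ ≠ 0`. -/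
theorem omega_sq_identity_superluminal (c E : ℝ) (Omega2 : ℝ → ℝ)
    (hOmega2 : ∀ ζ : ℝ, ζ ≠ 0 → Omega2 ζ =
      (1 / 64) * (-8 * (c ^ 2 - 1) * (E - 1) - (c - 1) ^ 2 / ζ ^ 2 - 16 * (c + 1) ^ 2 * ζ ^ 2)) :
    (∀ ζ : ℝ, ζ ≠ 0 → Omega2 ζ =
      -(1 / 64) * ((-4 * (1 + c) * ζ + (c - 1) / ζ) ^ 2 + 8 * E * (c ^ 2 - 1))) ∧
    (c ^ 2 > 1 → E ≥ 0 → ∀ ζ : ℝ, ζ ≠ 0 → Omega2 ζ ≤ 0) := by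
  have key : ∀ ζ : ℝ, ζ ≠ 0 → Omega2 ζ =
      -(1 / 64) * ((-4 * (1 + c) * ζ + (c - 1) / ζ) ^ 2 + 8 * E * (c ^ 2 - 1)) := by
    intro ζ hζ
    rw [hOmega2 ζ hζ]
    field_simp
    ring
  refine ⟨key, fun hc hE ζ hζ => ?_⟩
  rw [key ζ hζ]
  have h1 : (0:ℝ) ≤ (-4 * (1 + c) * ζ + (c - 1) / ζ) ^ 2 := sq_nonneg _
  have h2 : (0:ℝ) ≤ 8 * E * (c ^ 2 - 1) := by nlinarith
  nlinarith
end

section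
/- Let c, E ∈ ℝ with −1 < c < 1 and E < 0 (subluminal rotational case). Define Ω²(ζ) = (1/64)·(−8(c²−1)(E−1) − (c−1)²/ζ² − 16(c+1)²ζ²) for ζ ∈ ℂ, ζ ≠ 0. Then the set {ζ ∈ ℂ : ζ ≠ 0 and Ω²(ζ) = 0} consists of exactly the four purely imaginary numbers ± i·(sqrt(1−c²)/(2·sqrt(2)·(c+1)))·(sqrt(−E) + sqrt(2−E)) and ± i·(sqrt(1−c²)/(2·sqrt(2)·(c+1)))·(sqrt(2−E) − sqrt(−E)). -/
open Complex

/-- Subluminal rotational case `−1 < c < 1`, `E < 0`: the nonzero complex zeros of `Ω²` are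
exactly the four purely imaginary numbers
`±i·(sqrt(1−c²)/(2√2(c+1)))(sqrt(−E) ± sqrt(2−E))`. -/
theorem omega_sq_zeros_subluminal_rotational (c E : ℝ) (hc1 : -1 < c) (hc2 : c < 1)
    (hE : E < 0) :
    {ζ : ℂ | ζ ≠ 0 ∧
        (1 / 64 : ℂ) * (-8 * ((c : ℂ) ^ 2 - 1) * ((E : ℂ) - 1) - ((c : ℂ) - 1) ^ 2 / ζ ^ 2 -
          16 * ((c : ℂ) + 1) ^ 2 * ζ ^ 2) = 0} =
      {Complex.I * ((Real.sqrt (1 - c ^ 2) / (2 * Real.sqrt 2 * (c + 1))) *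
          (Real.sqrt (-E) + Real.sqrt (2 - E)) : ℝ),
       -(Complex.I * ((Real.sqrt (1 - c ^ 2) / (2 * Real.sqrt 2 * (c + 1))) *
          (Real.sqrt (-E) + Real.sqrt (2 - E)) : ℝ)),
       Complex.I * ((Real.sqrt (1 - c ^ 2) / (2 * Real.sqrt 2 * (c + 1))) *
          (Real.sqrt (2 - E) - Real.sqrt (-E)) : ℝ),
       -(Complex.I * ((Real.sqrt (1 - c ^ 2) / (2 * Real.sqrt 2 * (c + 1))) *
          (Real.sqrt (2 - E) - Real.sqrt (-E)) : ℝ))} := by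
  have hc1' : (0:ℝ) < c + 1 := by linarith
  have hs2 : Real.sqrt (1 - c^2) ^ 2 = 1 - c^2 := Real.sq_sqrt (by nlinarith)
  have hp2 : Real.sqrt (-E) ^ 2 = -E := Real.sq_sqrt (by linarith)
  have hq2 : Real.sqrt (2 - E) ^ 2 = 2 - E := Real.sq_sqrt (by linarith)
  have hsqrt2 : Real.sqrt 2 ^ 2 = 2 := Real.sq_sqrt (by norm_num)
  have hsqrt2_pos : (0:ℝ) < Real.sqrt 2 := Real.sqrt_pos.2 (by norm_num)
  have hs_pos : 0 < Real.sqrt (1 - c^2) := Real.sqrt_pos.2 (by nlinarith)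
  have hq_pos : 0 < Real.sqrt (2 - E) := Real.sqrt_pos.2 (by linarith)
  have hpq : Real.sqrt (-E) < Real.sqrt (2 - E) := by
    apply Real.sqrt_lt_sqrt (by linarith) (by linarith)
  set a : ℝ := Real.sqrt (1 - c ^ 2) / (2 * Real.sqrt 2 * (c + 1)) * (Real.sqrt (-E) + Real.sqrt (2 - E)) with ha
  set b : ℝ := Real.sqrt (1 - c ^ 2) / (2 * Real.sqrt 2 * (c + 1)) * (Real.sqrt (2 - E) - Real.sqrt (-E)) with hb
  have hD : (2 * Real.sqrt 2 * (c + 1)) ≠ 0 := by positivity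
  have H1 : 16*(c+1)^2*(a^2+b^2) = 8*(1-c^2)*(1-E) := by
    rw [ha, hb]; field_simp; ring_nf; simp only [hs2, hp2, hq2, hsqrt2]; ring
  have H2 : 4*(c+1)*(a*b) = 1 - c := by
    rw [ha, hb]; field_simp; ring_nf; simp only [hs2, hp2, hq2, hsqrt2]; ring
  have ha_pos : 0 < a := by
    rw [ha]
    have hp_nonneg : (0:ℝ) ≤ Real.sqrt (-E) := Real.sqrt_nonneg _
    exact mul_pos (div_pos hs_pos (by positivity)) (by linarith)
  have hb_pos : 0 < b := by
    rw [hb]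
    exact mul_pos (div_pos hs_pos (by positivity)) (by linarith)
  have hH1 : (16:ℂ)*((c:ℂ)+1)^2*((a:ℂ)^2+(b:ℂ)^2) = 8*(1-(c:ℂ)^2)*(1-(E:ℂ)) := by
    exact_mod_cast congrArg (Complex.ofReal) H1
  have hH2 : (4:ℂ)*((c:ℂ)+1)*((a:ℂ)*(b:ℂ)) = 1 - (c:ℂ) := by
    exact_mod_cast congrArg (Complex.ofReal) H2
  have hcne : ((c:ℂ)+1) ≠ 0 := by
    have h0 : ((c+1:ℝ):ℂ) ≠ 0 := Complex.ofReal_ne_zero.2 (ne_of_gt hc1')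
    push_cast at h0; exact h0
  have hc16 : (16:ℂ)*((c:ℂ)+1)^2 ≠ 0 := mul_ne_zero (by norm_num) (pow_ne_zero _ hcne)
  have key : ∀ ζ : ℂ, 16*((c:ℂ)+1)^2*((ζ - I*(a:ℂ))*(ζ + I*(a:ℂ))*((ζ - I*(b:ℂ))*(ζ + I*(b:ℂ)))) =
      16*((c:ℂ)+1)^2*ζ^4 + 8*((c:ℂ)^2-1)*((E:ℂ)-1)*ζ^2 + ((c:ℂ)-1)^2 := by
    intro ζ
    linear_combination (-Complex.I^2*ζ^2)*hH1 +
      (Complex.I^4*(4*((c:ℂ)+1)*((a:ℂ)*(b:ℂ)) + (1-(c:ℂ))))*hH2 +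
      (-8*(1-(c:ℂ)^2)*(1-(E:ℂ))*ζ^2 + ((c:ℂ)-1)^2*(Complex.I^2-1))*Complex.I_sq
  have main : ∀ ζ : ℂ, ζ ≠ 0 →
      (ζ - I*(a:ℂ))*(ζ + I*(a:ℂ))*((ζ - I*(b:ℂ))*(ζ + I*(b:ℂ))) = 0 →
      (1 / 64 : ℂ) * (-8 * ((c : ℂ) ^ 2 - 1) * ((E : ℂ) - 1) - ((c : ℂ) - 1) ^ 2 / ζ ^ 2 -
        16 * ((c : ℂ) + 1) ^ 2 * ζ ^ 2) = 0 := by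
    intro ζ hz hp
    have hpoly : 16*((c:ℂ)+1)^2*ζ^4 + 8*((c:ℂ)^2-1)*((E:ℂ)-1)*ζ^2 + ((c:ℂ)-1)^2 = 0 := by
      rw [← key ζ, hp, mul_zero]
    field_simp
    linear_combination -hpoly
  have hzA : Complex.I*(a:ℂ) ≠ 0 :=
    mul_ne_zero Complex.I_ne_zero (Complex.ofReal_ne_zero.2 (ne_of_gt ha_pos))
  have hzB : Complex.I*(b:ℂ) ≠ 0 :=
    mul_ne_zero Complex.I_ne_zero (Complex.ofReal_ne_zero.2 (ne_of_gt hb_pos))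
  ext ζ
  simp only [Set.mem_setOf_eq, Set.mem_insert_iff, Set.mem_singleton_iff]
  constructor
  · rintro ⟨hz, heq⟩
    have hz2 : ζ^2 ≠ 0 := pow_ne_zero _ hz
    have heq' : 16*((c:ℂ)+1)^2*ζ^4 + 8*((c:ℂ)^2-1)*((E:ℂ)-1)*ζ^2 + ((c:ℂ)-1)^2 = 0 := by
      field_simp at heq
      linear_combination -heq
    have hfac : 16*((c:ℂ)+1)^2*((ζ - I*(a:ℂ))*(ζ + I*(a:ℂ))*((ζ - I*(b:ℂ))*(ζ + I*(b:ℂ)))) = 0 := by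
      rw [key ζ]; exact heq' 
    rcases mul_eq_zero.1 hfac with h | h
    · exact absurd h hc16
    rcases mul_eq_zero.1 h with h | h
    · rcases mul_eq_zero.1 h with h | h
      · left; exact sub_eq_zero.1 h
      · right; left; exact eq_neg_of_add_eq_zero_left h
    · rcases mul_eq_zero.1 h with h | h
      · right; right; left; exact sub_eq_zero.1 h
      · right; right; right; exact eq_neg_of_add_eq_zero_left h
  · rintro (rfl | rfl | rfl | rfl)
    · exact ⟨hzA, main _ hzA (by ring)⟩
    · exact ⟨neg_ne_zero.2 hzA, main _ (neg_ne_zero.2 hzA) (by ring)⟩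
    · exact ⟨hzB, main _ hzB (by ring)⟩
    · exact ⟨neg_ne_zero.2 hzB, main _ (neg_ne_zero.2 hzB) (by ring)⟩
end

section
/- Let c, E ∈ ℝ with c > 1 and E > 2 (superluminal rotational case). Define Ω²(ζ) = (1/64)·(−8(c²−1)(E−1) − (c−1)²/ζ² − 16(c+1)²ζ²) for ζ ∈ ℂ, ζ ≠ 0. Then the set {ζ ∈ ℂ : ζ ≠ 0 and Ω²(ζ) = 0} consists of exactly the four purely imaginary numbers ± i·(sqrt(c²−1)/(2·sqrt(2)·(c+1)))·(sqrt(E) + sqrt(E−2)) and ± i·(sqrt(c²−1)/(2·sqrt(2)·(c+1)))·(sqrt(E) − sqrt(E−2)). -/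
open Complex

/-- Superluminal rotational case `c > 1`, `E > 2`: the nonzero complex zeros of `Ω²` are
exactly the four purely imaginary numbers
`±i·(sqrt(c²−1)/(2√2(c+1)))(sqrt(E) ± sqrt(E−2))`. -/
theorem omega_sq_zeros_superluminal_rotational (c E : ℝ) (hc : c > 1) (hE : E > 2) :
    {ζ : ℂ | ζ ≠ 0 ∧
        (1 / 64 : ℂ) * (-8 * ((c : ℂ) ^ 2 - 1) * ((E : ℂ) - 1) - ((c : ℂ) - 1) ^ 2 / ζ ^ 2 -
          16 * ((c : ℂ) + 1) ^ 2 * ζ ^ 2) = 0} =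
      {Complex.I * ((Real.sqrt (c ^ 2 - 1) / (2 * Real.sqrt 2 * (c + 1))) *
          (Real.sqrt E + Real.sqrt (E - 2)) : ℝ),
       -(Complex.I * ((Real.sqrt (c ^ 2 - 1) / (2 * Real.sqrt 2 * (c + 1))) *
          (Real.sqrt E + Real.sqrt (E - 2)) : ℝ)),
       Complex.I * ((Real.sqrt (c ^ 2 - 1) / (2 * Real.sqrt 2 * (c + 1))) *
          (Real.sqrt E - Real.sqrt (E - 2)) : ℝ),
       -(Complex.I * ((Real.sqrt (c ^ 2 - 1) / (2 * Real.sqrt 2 * (c + 1))) *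
          (Real.sqrt E - Real.sqrt (E - 2)) : ℝ))} := by
  have hc1 : (0:ℝ) < c + 1 := by linarith
  have hc2 : (0:ℝ) < c^2 - 1 := by nlinarith
  have ha : Real.sqrt (c^2-1) ^ 2 = c^2-1 := Real.sq_sqrt hc2.le
  have hb : Real.sqrt 2 ^ 2 = 2 := Real.sq_sqrt (by norm_num)
  have hu : Real.sqrt E ^ 2 = E := Real.sq_sqrt (by linarith)
  have hv : Real.sqrt (E-2) ^ 2 = E - 2 := Real.sq_sqrt (by linarith)
  set p : ℝ := Real.sqrt (c ^ 2 - 1) / (2 * Real.sqrt 2 * (c + 1)) * (Real.sqrt E + Real.sqrt (E - 2)) with hpdef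
  set q : ℝ := Real.sqrt (c ^ 2 - 1) / (2 * Real.sqrt 2 * (c + 1)) * (Real.sqrt E - Real.sqrt (E - 2)) with hqdef
  have hb0 : Real.sqrt 2 ≠ 0 := by positivity
  have hc10 : (c:ℝ) + 1 ≠ 0 := hc1.ne'
  have hk : (Real.sqrt (c^2-1) / (2*Real.sqrt 2*(c+1)))^2 * (8*(c+1)^2) = c^2-1 := by
    rw [div_pow, mul_pow, mul_pow, ha, hb, div_mul_eq_mul_div,
      div_eq_iff (mul_ne_zero (by norm_num) (pow_ne_zero 2 hc10))]
    ring
  have hsum : 2*(c+1)^2*(p^2+q^2) = (c^2-1)*(E-1) := by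
    rw [hpdef, hqdef]
    linear_combination (E-1)*hk + 4*(c+1)^2*(Real.sqrt (c^2-1) / (2*Real.sqrt 2*(c+1)))^2*hu + 4*(c+1)^2*(Real.sqrt (c^2-1) / (2*Real.sqrt 2*(c+1)))^2*hv
  have hprod : 16*(c+1)^4*(p^2*q^2) = (c^2-1)^2 := by
    rw [hpdef, hqdef]
    linear_combination (16*(c+1)^4*(Real.sqrt (c^2-1) / (2*Real.sqrt 2*(c+1)))^4*(Real.sqrt E^2 - Real.sqrt (E-2)^2 + 2))*(hu - hv)
      + (8*(c+1)^2*(Real.sqrt (c^2-1) / (2*Real.sqrt 2*(c+1)))^2 + c^2-1)*hk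
  -- positivity of roots
  have hp : 0 < p := by
    rw [hpdef]
    have h1 : 0 < Real.sqrt (c^2-1) := Real.sqrt_pos.mpr hc2
    have h2 : 0 < Real.sqrt E := Real.sqrt_pos.mpr (by linarith)
    have h3 : 0 ≤ Real.sqrt (E-2) := Real.sqrt_nonneg _
    have h4 : 0 < Real.sqrt 2 := Real.sqrt_pos.mpr (by norm_num)
    positivity
  have hq : 0 < q := by
    rw [hqdef]
    have h1 : 0 < Real.sqrt (c^2-1) := Real.sqrt_pos.mpr hc2
    have h2 : Real.sqrt (E-2) < Real.sqrt E := Real.sqrt_lt_sqrt (by linarith) (by linarith)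
    have h4 : 0 < Real.sqrt 2 := Real.sqrt_pos.mpr (by norm_num)
    have : 0 < Real.sqrt (c^2-1) / (2*Real.sqrt 2*(c+1)) := by positivity
    nlinarith
  -- complex versions
  have hCc : ((c:ℂ)+1) ≠ 0 := by
    intro h
    have : ((c+1:ℝ):ℂ) = 0 := by push_cast; linear_combination h
    exact hc10 (by exact_mod_cast this)
  have hsumC : 2*((c:ℂ)+1)^2*((p:ℂ)^2+(q:ℂ)^2) = ((c:ℂ)^2-1)*((E:ℂ)-1) := by
    exact_mod_cast congrArg (Complex.ofReal) hsum
  have hprodC4 : 16*((c:ℂ)+1)^4*((p:ℂ)^2*(q:ℂ)^2) = ((c:ℂ)^2-1)^2 := by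
    exact_mod_cast congrArg (Complex.ofReal) hprod
  have hprodC : 16*((c:ℂ)+1)^2*((p:ℂ)^2*(q:ℂ)^2) = ((c:ℂ)-1)^2 := by
    have h2 : ((c:ℂ)+1)^2 ≠ 0 := pow_ne_zero 2 hCc
    apply mul_left_cancel₀ h2
    linear_combination hprodC4
  -- factorization
  have hfac : ∀ z : ℂ, -8*((c:ℂ)^2-1)*((E:ℂ)-1)*z^2 - ((c:ℂ)-1)^2 - 16*((c:ℂ)+1)^2*z^4 =
      -16*((c:ℂ)+1)^2 * ((z - I*(p:ℂ))*(z + I*(p:ℂ))*(z - I*(q:ℂ))*(z + I*(q:ℂ))) := by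
    intro z
    have hIp : (z - I*(p:ℂ))*(z + I*(p:ℂ)) = z^2 + (p:ℂ)^2 := by
      linear_combination (-(p:ℂ)^2) * Complex.I_sq
    have hIq : (z - I*(q:ℂ))*(z + I*(q:ℂ)) = z^2 + (q:ℂ)^2 := by
      linear_combination (-(q:ℂ)^2) * Complex.I_sq
    rw [show (z - I*(p:ℂ))*(z + I*(p:ℂ))*(z - I*(q:ℂ))*(z + I*(q:ℂ))
        = ((z - I*(p:ℂ))*(z + I*(p:ℂ)))*((z - I*(q:ℂ))*(z + I*(q:ℂ))) from by ring,
      hIp, hIq]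
    linear_combination 8*z^2*hsumC + hprodC
  have hroot : ∀ z : ℂ, z ≠ 0 →
      ((1 / 64 : ℂ) * (-8 * ((c : ℂ) ^ 2 - 1) * ((E : ℂ) - 1) - ((c : ℂ) - 1) ^ 2 / z ^ 2 -
        16 * ((c : ℂ) + 1) ^ 2 * z ^ 2) = 0 ↔
      (z - I*(p:ℂ))*(z + I*(p:ℂ))*(z - I*(q:ℂ))*(z + I*(q:ℂ)) = 0) := by
    intro z hz
    have hz2 : z^2 ≠ 0 := pow_ne_zero 2 hz
    constructor
    · intro heq
      have heq' : -8*((c:ℂ)^2-1)*((E:ℂ)-1)*z^2 - ((c:ℂ)-1)^2 - 16*((c:ℂ)+1)^2*z^4 = 0 := by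
        have h2 := heq
        field_simp at h2
        linear_combination h2
      rw [hfac z] at heq'
      have h16 : (-16*((c:ℂ)+1)^2 : ℂ) ≠ 0 :=
        mul_ne_zero (by norm_num) (pow_ne_zero 2 hCc)
      exact (mul_eq_zero.mp heq').resolve_left h16
    · intro hzero
      have heq' := hfac z
      rw [hzero, mul_zero] at heq'
      field_simp
      linear_combination heq'
  have hIp0 : I*((p:ℝ):ℂ) ≠ 0 := by
    simp [Complex.I_ne_zero, Complex.ofReal_ne_zero, hp.ne']
  have hIq0 : I*((q:ℝ):ℂ) ≠ 0 := by
    simp [Complex.I_ne_zero, Complex.ofReal_ne_zero, hq.ne']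
  ext z
  simp only [Set.mem_setOf_eq, Set.mem_insert_iff, Set.mem_singleton_iff]
  constructor
  · rintro ⟨hz, heq⟩
    have hzero := (hroot z hz).mp heq
    rcases mul_eq_zero.mp hzero with h | h
    · rcases mul_eq_zero.mp h with h' | h'
      · rcases mul_eq_zero.mp h' with h'' | h''
        · exact Or.inl (by linear_combination h'')
        · exact Or.inr (Or.inl (by linear_combination h''))
      · exact Or.inr (Or.inr (Or.inl (by linear_combination h')))
    · exact Or.inr (Or.inr (Or.inr (by linear_combination h)))
  · rintro (rfl | rfl | rfl | rfl)
    · exact ⟨hIp0, (hroot _ hIp0).mpr (by ring)⟩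
    · exact ⟨neg_ne_zero.mpr hIp0, (hroot _ (neg_ne_zero.mpr hIp0)).mpr (by ring)⟩
    · exact ⟨hIq0, (hroot _ hIq0).mpr (by ring)⟩
    · exact ⟨neg_ne_zero.mpr hIq0, (hroot _ (neg_ne_zero.mpr hIq0)).mpr (by ring)⟩
end

section
/- Let c, E ∈ ℝ with −1 < c < 1 and E < 0 (subluminal rotational case). Define Ω²(iy) = (1/64)·(−8(c²−1)(E−1) + (c−1)²/y² + 16(c+1)²y²) for real y ≠ 0. Then {y ∈ ℝ : y > 0 and Ω²(iy) ≤ 0} is exactly the closed interval [ (sqrt(1−c²)/(2·sqrt(2)·(c+1)))·(sqrt(2−E) − sqrt(−E)), (sqrt(1−c²)/(2·sqrt(2)·(c+1)))·(sqrt(2−E) + sqrt(−E)) ]. -/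
lemma aux_prod_nonpos_iff (r₁ r₂ y : ℝ) (h0 : 0 < r₁) (h12 : r₁ < r₂) (hy : 0 < y) :
    (y ^ 2 - r₁ ^ 2) * (y ^ 2 - r₂ ^ 2) ≤ 0 ↔ r₁ ≤ y ∧ y ≤ r₂ := by
  constructor
  · intro hprod
    constructor
    · by_contra h
      push_neg at h
      have h1 : 0 < r₁ ^ 2 - y ^ 2 := by nlinarith
      have h2 : 0 < r₂ ^ 2 - y ^ 2 := by nlinarith
      nlinarith [mul_pos h1 h2]
    · by_contra h
      push_neg at h
      have h1 : 0 < y ^ 2 - r₁ ^ 2 := by nlinarith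
      have h2 : 0 < y ^ 2 - r₂ ^ 2 := by nlinarith
      nlinarith [mul_pos h1 h2]
  · rintro ⟨h1, h2⟩
    have ha : 0 ≤ y ^ 2 - r₁ ^ 2 := by nlinarith
    have hb : y ^ 2 - r₂ ^ 2 ≤ 0 := by nlinarith
    nlinarith [mul_nonneg ha (neg_nonneg.mpr hb)]

/-- Subluminal rotational case `−1 < c < 1`, `E < 0`: the set of positive `y` with
`Ω²(iy) ≤ 0` is exactly the closed interval between the two positive imaginary zeros. -/
theorem omega_sq_nonpos_interval_subluminal_rotational (c E : ℝ) (hc1 : -1 < c) (hc2 : c < 1)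
    (hE : E < 0) (Omega2i : ℝ → ℝ)
    (hOmega2i : ∀ y : ℝ, y ≠ 0 → Omega2i y =
      (1 / 64) * (-8 * (c ^ 2 - 1) * (E - 1) + (c - 1) ^ 2 / y ^ 2 + 16 * (c + 1) ^ 2 * y ^ 2)) :
    {y : ℝ | 0 < y ∧ Omega2i y ≤ 0} =
      Set.Icc ((Real.sqrt (1 - c ^ 2) / (2 * Real.sqrt 2 * (c + 1))) *
          (Real.sqrt (2 - E) - Real.sqrt (-E)))
        ((Real.sqrt (1 - c ^ 2) / (2 * Real.sqrt 2 * (c + 1))) *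
          (Real.sqrt (2 - E) + Real.sqrt (-E))) := by
  have hcp : (0:ℝ) < c + 1 := by linarith
  have hcm : (0:ℝ) < 1 - c := by linarith
  set s := Real.sqrt (2 - E) with hs_def
  set t := Real.sqrt (-E) with ht_def
  set u := Real.sqrt (1 - c ^ 2) with hu_def
  set v := Real.sqrt 2 with hv_def
  have hs2 : s ^ 2 = 2 - E := Real.sq_sqrt (by linarith)
  have ht2 : t ^ 2 = -E := Real.sq_sqrt (by linarith)
  have hu2 : u ^ 2 = 1 - c ^ 2 := Real.sq_sqrt (by nlinarith)
  have hv2 : v ^ 2 = 2 := Real.sq_sqrt (by norm_num)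
  have hv0 : (0:ℝ) < v := Real.sqrt_pos.mpr (by norm_num)
  have hu0 : (0:ℝ) < u := Real.sqrt_pos.mpr (by nlinarith)
  have ht0 : (0:ℝ) < t := Real.sqrt_pos.mpr (by linarith)
  have hst : t < s := Real.sqrt_lt_sqrt (by linarith) (by linarith)
  set k := u / (2 * v * (c + 1)) with hk_def
  have hk0 : (0:ℝ) < k := by positivity
  set r₁ := k * (s - t) with hr1_def
  set r₂ := k * (s + t) with hr2_def
  have hr₁0 : (0:ℝ) < r₁ := mul_pos hk0 (by linarith)
  have hr₂0 : (0:ℝ) < r₂ := mul_pos hk0 (by linarith)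
  have hr12 : r₁ < r₂ := by
    rw [hr1_def, hr2_def]
    exact mul_lt_mul_of_pos_left (by linarith) hk0
  have hk2 : 8 * (c + 1) ^ 2 * k ^ 2 = 1 - c ^ 2 := by
    have hne : (2 * v * (c + 1)) ≠ 0 := by positivity
    have : k * (2 * v * (c + 1)) = u := div_mul_cancel₀ u hne
    nlinarith [this]
  have key1 : 4 * (c + 1) ^ 2 * (r₁ * r₂) = (1 - c) * (c + 1) := by
    rw [hr1_def, hr2_def]
    linear_combination (4 * (c + 1) ^ 2 * k ^ 2) * hs2 -
      (4 * (c + 1) ^ 2 * k ^ 2) * ht2 + hk2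
  have key2 : 2 * (c + 1) ^ 2 * (r₁ ^ 2 + r₂ ^ 2) = (1 - c) * (c + 1) * (1 - E) := by
    rw [hr1_def, hr2_def]
    linear_combination (4 * (c + 1) ^ 2 * k ^ 2) * hs2 +
      (4 * (c + 1) ^ 2 * k ^ 2) * ht2 + (1 - E) * hk2
  have key1sq : 16 * (c + 1) ^ 4 * (r₁ * r₂) ^ 2 = (1 - c) ^ 2 * (c + 1) ^ 2 := by
    linear_combination (4 * (c + 1) ^ 2 * (r₁ * r₂) + (1 - c) * (c + 1)) * key1
  have hfact : ∀ y : ℝ, y ≠ 0 →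
      64 * (c + 1) ^ 2 * y ^ 2 * Omega2i y =
        16 * (c + 1) ^ 4 * (y ^ 2 - r₁ ^ 2) * (y ^ 2 - r₂ ^ 2) := by
    intro y hy
    rw [hOmega2i y hy]
    have hinv : y ^ 2 * (y ^ 2)⁻¹ = 1 := mul_inv_cancel₀ (pow_ne_zero 2 hy)
    linear_combination (8 * (c + 1) ^ 2 * y ^ 2) * key2 - key1sq +
      ((c + 1) ^ 2 * (c - 1) ^ 2) * hinv
  ext y
  simp only [Set.mem_setOf_eq, Set.mem_Icc]
  have hC : (0:ℝ) < 16 * (c + 1) ^ 4 := by positivity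
  constructor
  · rintro ⟨hy, hle⟩
    have hy' : y ≠ 0 := ne_of_gt hy
    have hf := hfact y hy'
    have hle' : 64 * (c + 1) ^ 2 * y ^ 2 * Omega2i y ≤ 0 :=
      mul_nonpos_of_nonneg_of_nonpos (by positivity) hle
    have hmul : 16 * (c + 1) ^ 4 * ((y ^ 2 - r₁ ^ 2) * (y ^ 2 - r₂ ^ 2)) ≤
        16 * (c + 1) ^ 4 * 0 := by
      rw [mul_zero, ← mul_assoc, ← hf]; exact hle'
    have hprod := le_of_mul_le_mul_left hmul hC
    exact (aux_prod_nonpos_iff r₁ r₂ y hr₁0 hr12 hy).mp hprod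
  · rintro ⟨h1, h2⟩
    have hy : 0 < y := lt_of_lt_of_le hr₁0 h1
    have hy' : y ≠ 0 := ne_of_gt hy
    have hf := hfact y hy'
    have hprod : (y ^ 2 - r₁ ^ 2) * (y ^ 2 - r₂ ^ 2) ≤ 0 :=
      (aux_prod_nonpos_iff r₁ r₂ y hr₁0 hr12 hy).mpr ⟨h1, h2⟩
    have hmul : 64 * (c + 1) ^ 2 * y ^ 2 * Omega2i y ≤
        64 * (c + 1) ^ 2 * y ^ 2 * 0 := by
      rw [mul_zero, hf, mul_assoc]
      exact mul_nonpos_of_nonneg_of_nonpos (le_of_lt hC) hprod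
    exact ⟨hy, le_of_mul_le_mul_left hmul (by positivity)⟩
end

section
/- Let c, E ∈ ℝ with c > 1 and E > 2 (superluminal rotational case). Define Ω²(iy) = (1/64)·(−8(c²−1)(E−1) + (c−1)²/y² + 16(c+1)²y²) for real y ≠ 0. Then {y ∈ ℝ : y > 0 and Ω²(iy) ≤ 0} is exactly the closed interval [ (sqrt(c²−1)/(2·sqrt(2)·(c+1)))·(sqrt(E) − sqrt(E−2)), (sqrt(c²−1)/(2·sqrt(2)·(c+1)))·(sqrt(E) + sqrt(E−2)) ]. -/
/-- Superluminal rotational case `c > 1`, `E > 2`: the set of positive `y` with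
`Ω²(iy) ≤ 0` is exactly the closed interval between the two positive imaginary zeros. -/
theorem omega_sq_nonpos_interval_superluminal_rotational (c E : ℝ) (hc : c > 1) (hE : E > 2)
    (Omega2i : ℝ → ℝ)
    (hOmega2i : ∀ y : ℝ, y ≠ 0 → Omega2i y =
      (1 / 64) * (-8 * (c ^ 2 - 1) * (E - 1) + (c - 1) ^ 2 / y ^ 2 + 16 * (c + 1) ^ 2 * y ^ 2)) :
    {y : ℝ | 0 < y ∧ Omega2i y ≤ 0} =
      Set.Icc ((Real.sqrt (c ^ 2 - 1) / (2 * Real.sqrt 2 * (c + 1))) *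
          (Real.sqrt E - Real.sqrt (E - 2)))
        ((Real.sqrt (c ^ 2 - 1) / (2 * Real.sqrt 2 * (c + 1))) *
          (Real.sqrt E + Real.sqrt (E - 2))) := by
  have hc1 : (0:ℝ) < c + 1 := by linarith
  have hc1p : (0:ℝ) < (c + 1) ^ 2 := by positivity
  have hc2 : (0:ℝ) < c ^ 2 - 1 := by nlinarith
  set s := Real.sqrt (c ^ 2 - 1) with hsdef
  set t := Real.sqrt 2 with htdef
  set p := Real.sqrt E with hpdef
  set q := Real.sqrt (E - 2) with hqdef
  have hs : s ^ 2 = c ^ 2 - 1 := Real.sq_sqrt hc2.le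
  have ht : t ^ 2 = 2 := Real.sq_sqrt (by norm_num)
  have hp : p ^ 2 = E := Real.sq_sqrt (by linarith)
  have hq : q ^ 2 = E - 2 := Real.sq_sqrt (by linarith)
  have hspos : 0 < s := Real.sqrt_pos.2 hc2
  have htpos : 0 < t := Real.sqrt_pos.2 (by norm_num)
  have hqnn : 0 ≤ q := Real.sqrt_nonneg _
  have hqp : q < p := Real.sqrt_lt_sqrt (by linarith) (by linarith)
  set r1 := s / (2 * t * (c + 1)) * (p - q) with hr1def
  set r2 := s / (2 * t * (c + 1)) * (p + q) with hr2def
  clear_value s t p q r1 r2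
  have hapos : 0 < s / (2 * t * (c + 1)) := by positivity
  have hr1pos : 0 < r1 := by
    rw [hr1def]; apply mul_pos hapos; linarith
  have hr12 : r1 ≤ r2 := by
    rw [hr1def, hr2def]
    apply mul_le_mul_of_nonneg_left _ hapos.le; linarith
  have hprod : r1 * r2 = (c ^ 2 - 1) / (4 * (c + 1) ^ 2) := by
    have h1 : r1 * r2 = s ^ 2 * (p ^ 2 - q ^ 2) / (4 * t ^ 2 * (c + 1) ^ 2) := by
      rw [hr1def, hr2def]; field_simp; ring
    rw [h1, hs, ht, hp, hq]; field_simp; ring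
  have hsum : r1 ^ 2 + r2 ^ 2 = (c ^ 2 - 1) * (E - 1) / (2 * (c + 1) ^ 2) := by
    have h1 : r1 ^ 2 + r2 ^ 2 = s ^ 2 * (2 * p ^ 2 + 2 * q ^ 2) / (4 * t ^ 2 * (c + 1) ^ 2) := by
      rw [hr1def, hr2def]; field_simp; ring
    rw [h1, hs, ht, hp, hq]; field_simp; ring
  have hsum' : 2 * (c + 1) ^ 2 * (r1 ^ 2 + r2 ^ 2) = (c ^ 2 - 1) * (E - 1) := by
    rw [hsum]; field_simp
  have hprodsq : 16 * (c + 1) ^ 2 * (r1 * r2) ^ 2 = (c - 1) ^ 2 := by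
    rw [hprod]; field_simp; ring
  have hfact : ∀ y : ℝ, y ≠ 0 → 64 * y ^ 2 * Omega2i y =
      16 * (c + 1) ^ 2 * ((y ^ 2 - r1 ^ 2) * (y ^ 2 - r2 ^ 2)) := by
    intro y hy
    rw [hOmega2i y hy]
    have hd : (c - 1) ^ 2 / y ^ 2 * y ^ 2 = (c - 1) ^ 2 := by field_simp
    have key : 16 * (c + 1) ^ 2 * ((y ^ 2 - r1 ^ 2) * (y ^ 2 - r2 ^ 2)) =
        16 * (c + 1) ^ 2 * y ^ 4 - 8 * (c ^ 2 - 1) * (E - 1) * y ^ 2 + (c - 1) ^ 2 := by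
      linear_combination (-8 * y ^ 2) * hsum' + hprodsq
    linear_combination hd - key
  ext y
  simp only [Set.mem_setOf_eq, Set.mem_Icc]
  constructor
  · rintro ⟨hy, hle⟩
    have hf := hfact y hy.ne'
    have hΩy : 64 * y ^ 2 * Omega2i y ≤ 0 :=
      mul_nonpos_of_nonneg_of_nonpos (by positivity) hle
    have h16 : (0:ℝ) < 16 * (c + 1) ^ 2 := by positivity
    have hX : 16 * (c + 1) ^ 2 * ((y ^ 2 - r1 ^ 2) * (y ^ 2 - r2 ^ 2)) ≤ 16 * (c + 1) ^ 2 * 0 := by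
      rw [mul_zero, ← hf]; exact hΩy
    have hkey : (y ^ 2 - r1 ^ 2) * (y ^ 2 - r2 ^ 2) ≤ 0 := le_of_mul_le_mul_left hX h16
    clear hf hX hΩy hOmega2i hfact hsdef htdef hpdef hqdef hr1def hr2def hs ht hp hq hprod hsum hsum' hprodsq hapos
    constructor
    · by_contra h
      push_neg at h
      have h1 : y ^ 2 < r1 ^ 2 := pow_lt_pow_left₀ h hy.le two_ne_zero
      have h2 : r1 ^ 2 ≤ r2 ^ 2 := pow_le_pow_left₀ hr1pos.le hr12 2
      nlinarith [mul_pos (sub_pos.2 h1) (sub_pos.2 (lt_of_lt_of_le h1 h2))]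
    · by_contra h
      push_neg at h
      have h1 : r2 ^ 2 < y ^ 2 := pow_lt_pow_left₀ h (le_trans hr1pos.le hr12) two_ne_zero
      have h2 : r1 ^ 2 ≤ r2 ^ 2 := pow_le_pow_left₀ hr1pos.le hr12 2
      nlinarith [mul_pos (sub_pos.2 (lt_of_le_of_lt h2 h1)) (sub_pos.2 h1)]
  · rintro ⟨h1, h2⟩
    have hy : 0 < y := lt_of_lt_of_le hr1pos h1
    refine ⟨hy, ?_⟩
    have hf := hfact y hy.ne'
    clear hOmega2i hfact hsdef htdef hpdef hqdef hr1def hr2def hs ht hp hq hprod hsum hsum' hprodsq hapos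
    have hkey : (y ^ 2 - r1 ^ 2) * (y ^ 2 - r2 ^ 2) ≤ 0 := by
      apply mul_nonpos_of_nonneg_of_nonpos
      · exact sub_nonneg.2 (pow_le_pow_left₀ hr1pos.le h1 2)
      · exact sub_nonpos.2 (pow_le_pow_left₀ hy.le h2 2)
    by_contra h
    push_neg at h
    have h64 : (0:ℝ) < 64 * y ^ 2 := by positivity
    have hK : 16 * (c + 1) ^ 2 * ((y ^ 2 - r1 ^ 2) * (y ^ 2 - r2 ^ 2)) ≤ 0 :=
      mul_nonpos_of_nonneg_of_nonpos (by positivity) hkey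
    linarith [mul_pos h64 h, hf, hK]
end
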